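/- (Mixed addition in Jacobian coordinates.) Let (X1, Y1, Z1) with Z1 ≠ 0 represent the affine point (x1, y1) = (X1/Z1², Y1/Z1³) on E: y² = x³ + a4·x + a6, and let (x2, y2) be an affine point of E with x1 ≠ x2. Define T1 = Z1², R2 = y2², B = x2·T1, D = ((y2 + Z1)² − R2 − T1)·T1, H = B − X1, I = H², E' = 4·I, J = H·E', L1 = D − 2·Y1, V = X1·E', X3 = L1² − J − 2·V, Y3 = L1·(V − X3) − 2·Y1·J, Z3 = (Z1 + H)² − T1 − I. Then Z3 ≠ 0, λ = L1/Z3 where λ = (y2 − y1)/(x2 − x1), and (X3/Z3², Y3/Z3³) = (x3, y3) where x3 = λ² − x1 − x2 and y3 = λ·(x1 − x3) − y1; i.e. (X3 : Y3 : Z3) represents the sum of the two points on E. -/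

import Mathlib

/-- Mixed addition in Jacobian coordinates on a Weierstrass curve
y² = x³ + a₄x + a₆ : the explicit formulas compute the chord sum. -/
theorem jacobian_mixed_addition_correct
    (K : Type*) [Field K] (hchar : (2 : K) ≠ 0)
    (a4 a6 : K)
    (X1 Y1 Z1 : K) (hZ1 : Z1 ≠ 0)
    (x1 y1 x2 y2 : K)
    (hx1 : x1 = X1 / Z1 ^ 2) (hy1 : y1 = Y1 / Z1 ^ 3)
    (h1 : y1 ^ 2 = x1 ^ 3 + a4 * x1 + a6)
    (h2 : y2 ^ 2 = x2 ^ 3 + a4 * x2 + a6)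
    (hxne : x1 ≠ x2)
    (T1 R2 B D H I E' J L1 V X3 Y3 Z3 : K)
    (hT1 : T1 = Z1 ^ 2) (hR2 : R2 = y2 ^ 2) (hB : B = x2 * T1)
    (hD : D = ((y2 + Z1) ^ 2 - R2 - T1) * T1)
    (hH : H = B - X1) (hI : I = H ^ 2) (hE : E' = 4 * I) (hJ : J = H * E')
    (hL1 : L1 = D - 2 * Y1) (hV : V = X1 * E')
    (hX3 : X3 = L1 ^ 2 - J - 2 * V)
    (hY3 : Y3 = L1 * (V - X3) - 2 * Y1 * J)
    (hZ3 : Z3 = (Z1 + H) ^ 2 - T1 - I)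
    (lam x3 y3 : K)
    (hlam : lam = (y2 - y1) / (x2 - x1))
    (hx3 : x3 = lam ^ 2 - x1 - x2)
    (hy3 : y3 = lam * (x1 - x3) - y1) :
    Z3 ≠ 0 ∧ L1 / Z3 = lam ∧ X3 / Z3 ^ 2 = x3 ∧ Y3 / Z3 ^ 3 = y3 := by
  have hX1 : X1 = x1 * Z1 ^ 2 := by rw [hx1, div_mul_cancel₀ X1 (pow_ne_zero 2 hZ1)]
  have hY1 : Y1 = y1 * Z1 ^ 3 := by rw [hy1, div_mul_cancel₀ Y1 (pow_ne_zero 3 hZ1)]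
  have hd : x2 - x1 ≠ 0 := sub_ne_zero.mpr (Ne.symm hxne)
  have hHval : H = Z1 ^ 2 * (x2 - x1) := by rw [hH, hB, hT1, hX1]; ring
  have hEval : E' = 4 * Z1 ^ 4 * (x2 - x1) ^ 2 := by rw [hE, hI, hHval]; ring
  have hZ3val : Z3 = 2 * Z1 ^ 3 * (x2 - x1) := by
    rw [hZ3, hI, hT1, hHval]; ring
  have hZ3ne : Z3 ≠ 0 := by
    rw [hZ3val]
    exact mul_ne_zero (mul_ne_zero hchar (pow_ne_zero 3 hZ1)) hd
  have hL1val : L1 = 2 * Z1 ^ 3 * (y2 - y1) := by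
    rw [hL1, hD, hR2, hT1, hY1]; ring
  refine ⟨hZ3ne, ?_, ?_, ?_⟩
  · rw [hlam, hL1val, hZ3val]
    field_simp
  · rw [hX3, hx3, hlam, hZ3val, hL1val, hJ, hV, hX1, hEval, hHval]
    field_simp
    ring
  · rw [hY3, hy3, hx3, hX3, hlam, hZ3val, hL1val, hJ, hV, hX1, hY1, hEval, hHval]
    field_simp
    ring
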